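/- Let K be an infinite field, let n ≥ 1, d ≥ 1, and fix a d^{n}-cage over K. If P ∈ K[x_0,…,x_n] is homogeneous of degree d and P(p_I) = 0 for every multi-index I in the supra-simplicial range, i.e. every I ∈ {1,…,d}^n with ∑_{j=1}^n (I_j − 1) ≤ d, then P(p_I) = 0 for every I ∈ {1,…,d}^n; that is, P vanishes at all d^n nodes of the cage. -/

import Mathlib

open MvPolynomial Finset

namespace CageAux

@[reducible] def Idx (n d : ℕ) := {k : Fin n → Fin (d+1) // ∑ j, ((k j : ℕ)) ≤ d}

lemma degree_fin {N : ℕ} (m : Fin N →₀ ℕ) : m.degree = ∑ x, m x := by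
  rw [Finsupp.degree]
  exact Finset.sum_subset (Finset.subset_univ _)
    (fun x _ hx => Finsupp.notMem_support_iff.mp hx)

lemma single_of_degree_one {σ : Type*} (m : σ →₀ ℕ) (h : m.degree = 1) :
    ∃ a, m = Finsupp.single a 1 := by
  classical
  have hm0 : m ≠ 0 := by
    intro h0; rw [h0, map_zero] at h; exact one_ne_zero h.symm
  obtain ⟨a, ha⟩ := Finsupp.support_nonempty_iff.mpr hm0
  have hsplit : m a + ∑ b ∈ m.support.erase a, m b = 1 := by
    rw [Finset.add_sum_erase _ _ ha]; exact h
  have hma : m a ≠ 0 := Finsupp.mem_support_iff.mp ha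
  have hma1 : m a = 1 := by omega
  have hrest : ∑ b ∈ m.support.erase a, m b = 0 := by omega
  refine ⟨a, Finsupp.ext fun b => ?_⟩
  by_cases hb : b = a
  · subst hb; simp [hma1]
  · rw [Finsupp.single_apply, if_neg (Ne.symm hb)]
    by_cases hbs : b ∈ m.support
    · exact Finset.sum_eq_zero_iff.mp hrest b (Finset.mem_erase.mpr ⟨hb, hbs⟩)
    · exact Finsupp.notMem_support_iff.mp hbs

lemma hom1_eq_sum {K : Type*} [CommRing K] {N : ℕ} (q : MvPolynomial (Fin N) K)
    (hq : q.IsHomogeneous 1) :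
    q = ∑ i, MvPolynomial.C (MvPolynomial.coeff (Finsupp.single i 1) q) * MvPolynomial.X i := by
  apply MvPolynomial.ext
  intro m
  rw [MvPolynomial.coeff_sum]
  simp only [MvPolynomial.coeff_C_mul, MvPolynomial.coeff_X']
  by_cases hm : ∃ a, m = Finsupp.single a 1
  · obtain ⟨a, rfl⟩ := hm
    rw [Finset.sum_eq_single a]
    · simp
    · intro b _ hb
      rw [if_neg, mul_zero]
      exact fun hEq => hb (Finsupp.single_left_injective one_ne_zero hEq)
    · simp
  · rw [hq.coeff_eq_zero, Finset.sum_eq_zero]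
    · intro b _
      rw [if_neg, mul_zero]
      exact fun hEq => hm ⟨b, hEq.symm⟩
    · exact fun hdeg => hm (single_of_degree_one m hdeg)

lemma eval_affine {K : Type*} [CommRing K] {N : ℕ} (q : MvPolynomial (Fin N) K)
    (hq : q.IsHomogeneous 1) (u v : Fin N → K) (t : K) :
    MvPolynomial.eval (fun x => u x + t * v x) q
      = MvPolynomial.eval u q + t * MvPolynomial.eval v q := by
  conv_lhs => rw [hom1_eq_sum q hq]
  conv_rhs => rw [hom1_eq_sum q hq]
  simp only [map_sum, map_mul, eval_C, eval_X]
  rw [Finset.mul_sum, ← Finset.sum_add_distrib]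
  apply Finset.sum_congr rfl
  intro i _
  ring

lemma exists_avoid {K : Type*} [Field K] [Infinite K] {ι : Type*} [Fintype ι]
    (α β : ι → K) (h : ∀ i, α i ≠ 0 ∨ β i ≠ 0) :
    ∃ t : K, ∀ i, α i + t * β i ≠ 0 := by
  by_contra hc
  push_neg at hc
  set F : Polynomial K := ∏ i, (Polynomial.C (α i) + Polynomial.X * Polynomial.C (β i)) with hF
  have hFeval : ∀ t, F.eval t = 0 := by
    intro t
    obtain ⟨i, hi⟩ := hc t
    rw [hF, Polynomial.eval_prod]
    apply Finset.prod_eq_zero (Finset.mem_univ i)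
    simp only [Polynomial.eval_add, Polynomial.eval_mul, Polynomial.eval_C, Polynomial.eval_X]
    linear_combination hi
  have hF0 : F = 0 := Polynomial.zero_of_eval_zero F hFeval
  obtain ⟨i, _, hi⟩ := Finset.prod_eq_zero_iff.mp (hF ▸ hF0)
  rcases h i with h' | h'
  · apply h'
    have := congrArg (fun q => Polynomial.coeff q 0) hi
    simpa [Polynomial.mul_coeff_zero] using this
  · apply h'
    have := congrArg (fun q => Polynomial.coeff q 1) hi
    simpa [Polynomial.coeff_X_mul] using this

lemma coeff_single_sum {K : Type*} [CommRing K] {N : ℕ} (c : Fin N → K) (x : Fin N) :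
    MvPolynomial.coeff (Finsupp.single x 1)
      (∑ y, MvPolynomial.C (c y) * MvPolynomial.X y) = c x := by
  rw [MvPolynomial.coeff_sum]
  simp only [MvPolynomial.coeff_C_mul, MvPolynomial.coeff_X']
  rw [Finset.sum_eq_single x]
  · simp
  · intro b _ hb
    rw [if_neg, mul_zero]
    exact fun hEq => hb (Finsupp.single_left_injective one_ne_zero hEq)
  · simp

lemma exists_ell0 {K : Type*} [Field K] [Infinite K] {N : ℕ} {ι : Type*} [Fintype ι]
    (pts : ι → Fin N → K) (h : ∀ i, pts i ≠ 0) :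
    ∃ a : Fin N → K, ∀ i, ∑ x, pts i x * a x ≠ 0 := by
  by_contra hc
  push_neg at hc
  set G : MvPolynomial (Fin N) K :=
    ∏ i, ∑ x, MvPolynomial.C (pts i x) * MvPolynomial.X x with hG
  have hGeval : ∀ a : Fin N → K, MvPolynomial.eval a G = 0 := by
    intro a
    obtain ⟨i, hi⟩ := hc a
    rw [hG, map_prod]
    apply Finset.prod_eq_zero (Finset.mem_univ i)
    simpa using hi
  have hG0 : G = 0 := by
    apply MvPolynomial.funext (q := 0)
    intro a; simpa using hGeval a
  obtain ⟨i, _, hi⟩ := Finset.prod_eq_zero_iff.mp (hG ▸ hG0)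
  apply h i
  funext x
  have := congrArg (MvPolynomial.coeff (Finsupp.single x 1)) hi
  simpa [coeff_single_sum] using this

lemma card_filter_lt (d m : ℕ) (hm : m ≤ d) :
    ((Finset.univ : Finset (Fin d)).filter (fun i : Fin d => (i : ℕ) < m)).card = m := by
  have : ((Finset.univ : Finset (Fin d)).filter (fun i : Fin d => (i : ℕ) < m))
      = (Finset.range m).attachFin
        (fun x hx => lt_of_lt_of_le (Finset.mem_range.mp hx) hm) := by
    ext i
    simp [Finset.mem_attachFin]
  rw [this, Finset.card_attachFin, Finset.card_range]

noncomputable def equivSD (n d : ℕ) :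
    Idx n d ≃ {m : Fin (n+1) →₀ ℕ // m.degree = d} where
  toFun k := ⟨Finsupp.equivFunOnFinite.symm
      (Fin.snoc (fun j => (k.1 j : ℕ)) (d - ∑ j, (k.1 j : ℕ))), by
    rw [degree_fin]
    simp only [Finsupp.coe_equivFunOnFinite_symm]
    rw [Fin.sum_univ_castSucc]
    simp only [Fin.snoc_castSucc, Fin.snoc_last]
    have := k.2; omega⟩
  invFun m := ⟨fun j => ⟨m.1 j.castSucc, by
      have h1 : m.1 j.castSucc ≤ m.1.degree := Finsupp.le_degree _ _
      rw [m.2] at h1; omega⟩, by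
    have hd := m.2
    rw [degree_fin, Fin.sum_univ_castSucc] at hd
    simpa using (by omega : ∑ j, m.1 (Fin.castSucc j) ≤ d)⟩
  left_inv k := by
    apply Subtype.ext; funext j; apply Fin.ext
    simp
  right_inv m := by
    apply Subtype.ext
    apply Finsupp.ext
    intro x
    simp only [Finsupp.coe_equivFunOnFinite_symm]
    refine Fin.lastCases ?_ ?_ x
    · rw [Fin.snoc_last]
      have hd := m.2; rw [degree_fin, Fin.sum_univ_castSucc] at hd
      show d - ∑ j : Fin n, m.1 j.castSucc = m.1 (Fin.last n)
      omega
    · intro j; rw [Fin.snoc_castSucc]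

noncomputable def basisS {K : Type*} [Field K] (n d : ℕ) :
    Module.Basis (Idx n d) K (MvPolynomial.homogeneousSubmodule (Fin (n+1)) K d) := by
  classical
  let s : Set (Fin (n+1) →₀ ℕ) := {m | m.degree = d}
  let e1 : MvPolynomial.homogeneousSubmodule (Fin (n+1)) K d ≃ₗ[K] Finsupp.supported K K s :=
    (LinearEquiv.ofEq _ _ ((MvPolynomial.homogeneousSubmodule_eq_finsupp_supported (Fin (n+1)) K d).trans
      (Submodule.comap_equiv_eq_map_symm (AddMonoidAlgebra.coeffLinearEquiv K) _))).trans
      ((AddMonoidAlgebra.coeffLinearEquiv K).symm.submoduleMap (Finsupp.supported K K s)).symm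
  let e2 : Finsupp.supported K K s ≃ₗ[K] (s →₀ K) := Finsupp.supportedEquivFinsupp s
  exact (Finsupp.basisSingleOne.map (e1.trans e2).symm).reindex (equivSD n d).symm

lemma finrank_homog {K : Type*} [Field K] (n d : ℕ) :
    Module.finrank K (MvPolynomial.homogeneousSubmodule (Fin (n+1)) K d)
      = Fintype.card (Idx n d) :=
  Module.finrank_eq_card_basis (basisS n d)

end CageAux

/-- If a homogeneous polynomial of degree `d` vanishes at all nodes of a
supra-simplicial set of a `d^{n}`-cage, then it vanishes at all `d^n` nodes. -/
theorem vanish_on_supra_simplicial_implies_vanish_on_all_nodes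
    {K : Type*} [Field K] [Infinite K] (n d : ℕ) (hn : 1 ≤ n) (hd : 1 ≤ d)
    (L : Fin n → Fin d → MvPolynomial (Fin (n + 1)) K)
    (hL : ∀ j i, (L j i).IsHomogeneous 1)
    (p : (Fin n → Fin d) → Fin (n + 1) → K)
    (hp0 : ∀ I, p I ≠ 0)
    (hind : ∀ I : Fin n → Fin d, LinearIndependent K fun j => L j (I j))
    (hline : ∀ (I : Fin n → Fin d) (v : Fin (n + 1) → K),
      (∀ j, MvPolynomial.eval v (L j (I j)) = 0) ↔ ∃ c : K, v = c • p I)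
    (hne : ∀ (j : Fin n) (i : Fin d) (I : Fin n → Fin d),
      i ≠ I j → MvPolynomial.eval (p I) (L j i) ≠ 0)
    (P : MvPolynomial (Fin (n + 1)) K) (hP : P.IsHomogeneous d)
    (hvan : ∀ I : Fin n → Fin d, (∑ j, (I j : ℕ)) ≤ d →
      MvPolynomial.eval (p I) P = 0) :
    ∀ I : Fin n → Fin d, MvPolynomial.eval (p I) P = 0 := by
  classical
  intro I
  rcases le_or_gt (∑ j, (I j : ℕ)) d with hI | hI
  · exact hvan I hI
  -- here d ≥ 2 automatically
  have hd2 : 2 ≤ d := by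
    rcases Nat.lt_or_ge d 2 with h2 | h2
    · exfalso
      have hd1 : d = 1 := by omega
      have hz : ∀ j, (I j : ℕ) = 0 := by
        intro j; have := (I j).isLt; omega
      have : (∑ j, (I j : ℕ)) = 0 := Finset.sum_eq_zero (fun j _ => hz j)
      omega
    · exact h2
  -- basic vanishing at nodes
  have hzero : ∀ (J : Fin n → Fin d) (j : Fin n), MvPolynomial.eval (p J) (L j (J j)) = 0 :=
    fun J j => ((hline J (p J)).mpr ⟨1, (one_smul K (p J)).symm⟩) j
  -- the auxiliary linear form ℓ0 not vanishing at any node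
  obtain ⟨a, ha⟩ := CageAux.exists_ell0 p hp0
  set ℓ0 : MvPolynomial (Fin (n+1)) K := ∑ x, MvPolynomial.C (a x) * MvPolynomial.X x with hℓ0def
  have hℓ0hom : ℓ0.IsHomogeneous 1 :=
    MvPolynomial.IsHomogeneous.sum _ _ _ (fun x _ => MvPolynomial.isHomogeneous_C_mul_X (a x) x)
  have hℓ0 : ∀ J, MvPolynomial.eval (p J) ℓ0 ≠ 0 := by
    intro J
    rw [hℓ0def]
    simp only [map_sum, map_mul, eval_C, eval_X]
    rw [show (∑ x, a x * p J x) = ∑ x, p J x * a x from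
      Finset.sum_congr rfl (fun x _ => mul_comm _ _)]
    exact ha J
  -- the cage forms
  set T : CageAux.Idx n d → MvPolynomial (Fin (n+1)) K := fun k =>
    ℓ0 ^ (d - ∑ j, (k.1 j : ℕ)) *
      ∏ j, ∏ i ∈ Finset.univ.filter (fun i : Fin d => (i : ℕ) < (k.1 j : ℕ)), L j i with hTdef
  have hThom : ∀ k, (T k).IsHomogeneous d := by
    intro k
    have h1 : (ℓ0 ^ (d - ∑ j, (k.1 j : ℕ))).IsHomogeneous (d - ∑ j, (k.1 j : ℕ)) := by
      simpa using hℓ0hom.pow _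
    have h2 : MvPolynomial.IsHomogeneous
        (∏ j, ∏ i ∈ Finset.univ.filter (fun i : Fin d => (i : ℕ) < (k.1 j : ℕ)), L j i)
        (∑ j, (k.1 j : ℕ)) := by
      apply MvPolynomial.IsHomogeneous.prod Finset.univ _ (fun j => (k.1 j : ℕ))
      intro j _
      have hcard := CageAux.card_filter_lt d (k.1 j : ℕ) (by have := (k.1 j).isLt; omega)
      have hp2 := MvPolynomial.IsHomogeneous.prod
        (Finset.univ.filter (fun i : Fin d => (i : ℕ) < (k.1 j : ℕ)))
        (fun i => L j i) (fun _ => 1) (fun i _ => hL j i)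
      rw [Finset.sum_const, smul_eq_mul, mul_one, hcard] at hp2
      exact hp2
    have h3 := h1.mul h2
    have h4 : (d - ∑ j, (k.1 j : ℕ)) + (∑ j, (k.1 j : ℕ)) = d := by have := k.2; omega
    simp only [hTdef]
    rw [h4] at h3
    exact h3
  -- vanishing of T k at node J when k exceeds J somewhere
  have hEz : ∀ (k : CageAux.Idx n d) (J : Fin n → Fin d) (j : Fin n),
      (J j : ℕ) < (k.1 j : ℕ) → MvPolynomial.eval (p J) (T k) = 0 := by
    intro k J j hj
    simp only [hTdef, map_mul, map_pow, map_prod]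
    apply mul_eq_zero_of_right
    apply Finset.prod_eq_zero (Finset.mem_univ j)
    apply Finset.prod_eq_zero
      (Finset.mem_filter.mpr ⟨Finset.mem_univ (J j), hj⟩)
    exact hzero J j
  -- nonvanishing of T k at node J when k ≤ J componentwise
  have hEnz : ∀ (k : CageAux.Idx n d) (J : Fin n → Fin d),
      (∀ j, (k.1 j : ℕ) ≤ (J j : ℕ)) → MvPolynomial.eval (p J) (T k) ≠ 0 := by
    intro k J hk
    simp only [hTdef, map_mul, map_pow, map_prod]
    apply mul_ne_zero
    · exact pow_ne_zero _ (hℓ0 J)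
    · rw [Finset.prod_ne_zero_iff]
      intro j _
      rw [Finset.prod_ne_zero_iff]
      intro i hi
      have hlt : (i : ℕ) < (J j : ℕ) :=
        lt_of_lt_of_le (Finset.mem_filter.mp hi).2 (hk j)
      exact hne j i J (Fin.ne_of_val_ne (Nat.ne_of_lt hlt))
  -- the triangular elimination lemma
  have tri : ∀ (c : CageAux.Idx n d → K),
      (∀ J : Fin n → Fin d, (∑ j, (J j : ℕ)) ≤ d →
        (∑ k, c k * MvPolynomial.eval (p J) (T k)) = 0) →
      ∀ k, (∀ j, ((k.1 j : ℕ) < d)) → c k = 0 := by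
    intro c hc
    suffices H : ∀ m (k : CageAux.Idx n d), (∑ j, (k.1 j : ℕ)) = m →
        (∀ j, ((k.1 j : ℕ) < d)) → c k = 0 from fun k hk => H _ k rfl hk
    intro m
    induction m using Nat.strong_induction_on with
    | _ m IH =>
      intro k hm hk
      set J : Fin n → Fin d := fun j => ⟨(k.1 j : ℕ), hk j⟩ with hJdef
      have hJval : ∀ j, (J j : ℕ) = (k.1 j : ℕ) := fun j => rfl
      have hsumJ : (∑ j, (J j : ℕ)) ≤ d := by
        rw [Finset.sum_congr rfl (fun j _ => hJval j)]
        exact k.2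
      have h1 := hc J hsumJ
      have h2 : (∑ k', c k' * MvPolynomial.eval (p J) (T k'))
          = c k * MvPolynomial.eval (p J) (T k) := by
        apply Finset.sum_eq_single k
        · intro k' _ hk'
          by_cases hle : ∀ j, (k'.1 j : ℕ) ≤ (J j : ℕ)
          · apply mul_eq_zero_of_left
            have hne' : ∃ j, (k'.1 j : ℕ) ≠ (k.1 j : ℕ) := by
              by_contra hno; push_neg at hno
              exact hk' (Subtype.ext (funext fun j => Fin.ext (hno j)))
            obtain ⟨j0, hj0⟩ := hne'
            have hlt : (∑ j, (k'.1 j : ℕ)) < m := by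
              rw [← hm]
              exact Finset.sum_lt_sum (fun j _ => (hle j).trans_eq (hJval j))
                ⟨j0, Finset.mem_univ j0, lt_of_le_of_ne ((hle j0).trans_eq (hJval j0)) hj0⟩
            exact IH _ hlt k' rfl (fun j => lt_of_le_of_lt ((hle j).trans_eq (hJval j)) (hk j))
          · push_neg at hle
            obtain ⟨j0, hj0⟩ := hle
            exact mul_eq_zero_of_right _ (hEz k' J j0 hj0)
        · intro hkk; exact absurd (Finset.mem_univ k) hkk
      rw [h2] at h1
      rcases mul_eq_zero.mp h1 with h | h
      · exact h
      · exact absurd h (hEnz k J (fun j => le_of_eq (hJval j).symm))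
  -- linear independence of the family T
  have hTind : LinearIndependent K T := by
    rw [Fintype.linearIndependent_iff]
    intro c hc0
    have hcE : ∀ J : Fin n → Fin d,
        (∑ k, c k * MvPolynomial.eval (p J) (T k)) = 0 := by
      intro J
      have h := congrArg (MvPolynomial.eval (p J)) hc0
      rw [map_sum] at h
      simpa [MvPolynomial.smul_eval] using h
    have hsmall := tri c (fun J _ => hcE J)
    intro k
    by_cases hks : ∀ j, ((k.1 j : ℕ) < d)
    · exact hsmall k hks
    push_neg at hks
    obtain ⟨j0, hj0⟩ := hks
    have hkj0 : (k.1 j0 : ℕ) = d := le_antisymm (by have := (k.1 j0).isLt; omega) hj0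
    have hk0 : ∀ j, j ≠ j0 → (k.1 j : ℕ) = 0 := by
      intro j hj
      have e1 : (k.1 j0 : ℕ) + ∑ x ∈ Finset.univ.erase j0, (k.1 x : ℕ)
          = ∑ x, (k.1 x : ℕ) :=
        Finset.add_sum_erase Finset.univ (fun x => (k.1 x : ℕ)) (Finset.mem_univ j0)
      have e2 : (k.1 j : ℕ) ≤ ∑ x ∈ Finset.univ.erase j0, (k.1 x : ℕ) :=
        Finset.single_le_sum (f := fun x => ((k.1 x : ℕ))) (fun _ _ => Nat.zero_le _)
          (Finset.mem_erase.mpr ⟨hj, Finset.mem_univ j⟩)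
      have := k.2
      omega
    have hsumk : (∑ j, (k.1 j : ℕ)) = d := by
      have e1 : (k.1 j0 : ℕ) + ∑ x ∈ Finset.univ.erase j0, (k.1 x : ℕ)
          = ∑ x, (k.1 x : ℕ) :=
        Finset.add_sum_erase Finset.univ (fun x => (k.1 x : ℕ)) (Finset.mem_univ j0)
      have e2 : ∑ x ∈ Finset.univ.erase j0, (k.1 x : ℕ) = 0 :=
        Finset.sum_eq_zero (fun x hx => hk0 x (Finset.mem_erase.mp hx).1)
      omega
    -- construct the witness point w
    set A : Fin n → Fin d := fun _ => ⟨0, by omega⟩ with hA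
    set B : Fin n → Fin d := fun j => if j = j0 then ⟨1, by omega⟩ else ⟨0, by omega⟩ with hB
    have hAB : ∀ j, j ≠ j0 → A j = B j := by
      intro j hj; rw [hA, hB]; simp [hj]
    have hABj0 : A j0 ≠ B j0 := by
      intro hEq
      have := congrArg Fin.val hEq
      rw [hA, hB] at this
      simp at this
    have hnotboth : ∀ i : Fin d,
        MvPolynomial.eval (p A) (L j0 i) ≠ 0 ∨ MvPolynomial.eval (p B) (L j0 i) ≠ 0 := by
      intro i
      by_cases hiA : i = A j0
      · right; apply hne j0 i B; rw [hiA]; exact hABj0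
      · left; exact hne j0 i A hiA
    obtain ⟨t, ht⟩ := CageAux.exists_avoid _ _ hnotboth
    set w : Fin (n+1) → K := fun x => p A x + t * p B x with hw
    have hwL : ∀ (j : Fin n) (i : Fin d),
        MvPolynomial.eval w (L j i)
          = MvPolynomial.eval (p A) (L j i) + t * MvPolynomial.eval (p B) (L j i) :=
      fun j i => CageAux.eval_affine _ (hL j i) _ _ t
    have hv : (∑ k', c k' * MvPolynomial.eval w (T k')) = 0 := by
      have h := congrArg (MvPolynomial.eval w) hc0
      rw [map_sum] at h
      simpa [MvPolynomial.smul_eval] using h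
    have hterm : ∀ k', k' ≠ k → c k' * MvPolynomial.eval w (T k') = 0 := by
      intro k' hk'
      by_cases hks' : ∀ j, ((k'.1 j : ℕ) < d)
      · exact mul_eq_zero_of_left (hsmall k' hks') _
      push_neg at hks'
      obtain ⟨j1, hj1⟩ := hks'
      have hkj1 : (k'.1 j1 : ℕ) = d := le_antisymm (by have := (k'.1 j1).isLt; omega) hj1
      have hk0' : ∀ j, j ≠ j1 → (k'.1 j : ℕ) = 0 := by
        intro j hj
        have e1 : (k'.1 j1 : ℕ) + ∑ x ∈ Finset.univ.erase j1, (k'.1 x : ℕ)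
            = ∑ x, (k'.1 x : ℕ) :=
          Finset.add_sum_erase Finset.univ (fun x => (k'.1 x : ℕ)) (Finset.mem_univ j1)
        have e2 : (k'.1 j : ℕ) ≤ ∑ x ∈ Finset.univ.erase j1, (k'.1 x : ℕ) :=
          Finset.single_le_sum (f := fun x => ((k'.1 x : ℕ))) (fun _ _ => Nat.zero_le _)
            (Finset.mem_erase.mpr ⟨hj, Finset.mem_univ j⟩)
        have := k'.2
        omega
      have hj10 : j1 ≠ j0 := by
        intro hEq
        subst hEq
        apply hk'
        apply Subtype.ext
        funext j
        apply Fin.ext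
        by_cases hjj : j = j1
        · subst hjj; rw [hkj1, hkj0]
        · rw [hk0' j hjj, hk0 j hjj]
      apply mul_eq_zero_of_right
      simp only [hTdef, map_mul, map_pow, map_prod]
      apply mul_eq_zero_of_right
      apply Finset.prod_eq_zero (Finset.mem_univ j1)
      have hmem : A j1 ∈ Finset.univ.filter (fun i : Fin d => (i : ℕ) < (k'.1 j1 : ℕ)) := by
        apply Finset.mem_filter.mpr
        refine ⟨Finset.mem_univ _, ?_⟩
        rw [hkj1, hA]
        simpa using by omega
      apply Finset.prod_eq_zero hmem
      rw [hwL]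
      have hA1 : MvPolynomial.eval (p A) (L j1 (A j1)) = 0 := hzero A j1
      have hB1 : MvPolynomial.eval (p B) (L j1 (B j1)) = 0 := hzero B j1
      rw [← hAB j1 hj10] at hB1
      rw [hA1, hB1]
      ring
    have hsingle : (∑ k', c k' * MvPolynomial.eval w (T k'))
        = c k * MvPolynomial.eval w (T k) :=
      Finset.sum_eq_single k (fun b _ h => hterm b h) (fun h => absurd (Finset.mem_univ k) h)
    rw [hsingle] at hv
    have hTkw : MvPolynomial.eval w (T k) ≠ 0 := by
      simp only [hTdef, map_mul, map_pow, map_prod]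
      have hexp : d - (∑ j, (k.1 j : ℕ)) = 0 := by omega
      rw [hexp, pow_zero, one_mul]
      rw [Finset.prod_ne_zero_iff]
      intro j _
      rw [Finset.prod_ne_zero_iff]
      intro i hi
      by_cases hjj : j = j0
      · subst hjj; rw [hwL]; exact ht i
      · exfalso
        have hmem2 := (Finset.mem_filter.mp hi).2
        rw [hk0 j hjj] at hmem2
        omega
    rcases mul_eq_zero.mp hv with h | h
    · exact h
    · exact absurd h hTkw
  -- spanning: T' is a basis of the homogeneous degree-d forms
  let Md := MvPolynomial.homogeneousSubmodule (Fin (n+1)) K d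
  let T' : CageAux.Idx n d → Md := fun k => ⟨T k, hThom k⟩
  have hT'ind : LinearIndependent K T' := by
    apply LinearIndependent.of_comp (Md.subtype)
    have hcomp : ⇑(Md.subtype) ∘ T' = T := rfl
    rw [hcomp]; exact hTind
  haveI hNe : Nonempty (CageAux.Idx n d) := ⟨⟨fun _ => ⟨0, by omega⟩, by simp⟩⟩
  have hspan : Submodule.span K (Set.range T') = ⊤ :=
    hT'ind.span_eq_top_of_card_eq_finrank (CageAux.finrank_homog n d).symm
  have hPmem : (⟨P, hP⟩ : Md) ∈ Submodule.span K (Set.range T') := by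
    rw [hspan]; exact Submodule.mem_top
  obtain ⟨c, hc⟩ := (Submodule.mem_span_range_iff_exists_fun K).mp hPmem
  have hcV : (∑ k, c k • T k) = P := by
    have h := congrArg (fun q : Md => (q : MvPolynomial (Fin (n+1)) K)) hc
    simpa using h
  have hEval : ∀ J : Fin n → Fin d,
      MvPolynomial.eval (p J) P = ∑ k, c k * MvPolynomial.eval (p J) (T k) := by
    intro J
    rw [← hcV, map_sum]
    exact Finset.sum_congr rfl (fun k _ => MvPolynomial.smul_eval _ _ _)
  have hcs : ∀ k, (∀ j, ((k.1 j : ℕ) < d)) → c k = 0 :=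
    tri c (fun J hJ => by rw [← hEval J]; exact hvan J hJ)
  rw [hEval I]
  apply Finset.sum_eq_zero
  intro k _
  by_cases hks : ∀ j, ((k.1 j : ℕ) < d)
  · rw [hcs k hks, zero_mul]
  · push_neg at hks
    obtain ⟨j0, hj0⟩ := hks
    exact mul_eq_zero_of_right _ (hEz k I j0 (lt_of_lt_of_le (I j0).isLt hj0))
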